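/- For every t > 0 one has (1/2)·g(t) ≤ α·t·g'(t) ≤ α·g(t) (property (g_4) of Lemma 2.1). -/
import Mathlib


open Real Filter Set

theorem g_four (N : ℕ) (hN : 2 ≤ N) (α : ℝ) (hα : 1 / 2 < α)
    (g : ℝ → ℝ) (hg_diff : Differentiable ℝ g) (hg_zero : g 0 = 0)
    (hg_odd : ∀ t : ℝ, g (-t) = -g t)
    (hg_deriv : ∀ t : ℝ, deriv g t =
      (1 + (2 * α) ^ ((N : ℝ) - 1) * |g t| ^ ((N : ℝ) * (2 * α - 1))) ^ (-(1 / (N : ℝ))))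
    : ∀ t : ℝ, 0 < t →
      (1 / 2) * g t ≤ α * t * deriv g t ∧ α * t * deriv g t ≤ α * g t := by
  have h2α : (0:ℝ) < 2 * α := by linarith
  have hNpos : (0:ℝ) < (N:ℝ) := by exact_mod_cast (by omega : 0 < N)
  set A : ℝ := (2*α) ^ ((N:ℝ) - 1) with hA_def
  set β : ℝ := (N:ℝ) * (2*α - 1) with hβ_def
  have hA : 0 < A := rpow_pos_of_pos h2α _
  have hβ : 0 < β := mul_pos hNpos (by linarith)
  have hD : ∀ t, deriv g t = (1 + A * |g t| ^ β) ^ (-(1/(N:ℝ))) := hg_deriv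
  have hbase : ∀ t, (1:ℝ) ≤ 1 + A * |g t| ^ β := fun t => by
    nlinarith [mul_nonneg hA.le (rpow_nonneg (abs_nonneg (g t)) β)]
  have hbasepos : ∀ t, (0:ℝ) < 1 + A * |g t| ^ β := fun t =>
    lt_of_lt_of_le one_pos (hbase t)
  have hd_pos : ∀ t, 0 < deriv g t := fun t => by
    rw [hD]; exact rpow_pos_of_pos (hbasepos t) _
  have hmono : StrictMono g := strictMono_of_deriv_pos hd_pos
  have hgpos : ∀ t : ℝ, 0 < t → 0 < g t := fun t ht => by
    have := hmono ht; rwa [hg_zero] at this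
  -- deriv g is antitone on [0, ∞)
  have hanti : ∀ s t : ℝ, 0 ≤ s → s ≤ t → deriv g t ≤ deriv g s := by
    intro s t hs hst
    rw [hD, hD]
    apply rpow_le_rpow_of_nonpos (hbasepos s) _ (neg_nonpos.mpr (by positivity))
    have hgs : 0 ≤ g s := by
      rcases eq_or_lt_of_le hs with h | h
      · rw [← h, hg_zero]
      · exact (hgpos s h).le
    have h1 : |g s| ≤ |g t| := by
      rw [abs_of_nonneg hgs, abs_of_nonneg (hgs.trans (hmono.le_iff_le.mpr hst))]
      exact hmono.le_iff_le.mpr hst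
    have := rpow_le_rpow (abs_nonneg (g s)) h1 hβ.le
    nlinarith
  -- right inequality: t * deriv g t ≤ g t for t > 0
  have hright : ∀ t : ℝ, 0 < t → t * deriv g t ≤ g t := by
    intro t ht
    obtain ⟨c, hc, hslope⟩ := exists_hasDerivAt_eq_slope g (deriv g) ht
      hg_diff.continuous.continuousOn (fun x _ => (hg_diff x).hasDerivAt)
    rw [hg_zero, sub_zero, sub_zero] at hslope
    have h1 : deriv g t ≤ deriv g c := hanti c t hc.1.le hc.2.le
    have : deriv g c * t = g t := by field_simp at hslope ⊢; linarith [hslope]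
    nlinarith
  -- continuity of deriv g
  have hdc : Continuous (deriv g) := by
    have he : deriv g = fun t => (1 + A * |g t| ^ β) ^ (-(1/(N:ℝ))) := funext hD
    rw [he]
    apply Continuous.rpow_const
    · exact continuous_const.add (continuous_const.mul
        ((continuous_abs.comp hg_diff.continuous).rpow_const (fun x => Or.inr hβ.le)))
    · exact fun x => Or.inl (hbasepos x).ne'
  -- left inequality: g t ≤ 2 * α * t * deriv g t for t > 0
  have hleft : ∀ t : ℝ, 0 < t → g t ≤ 2 * α * t * deriv g t := by
    by_contra hcon
    push_neg at hcon
    obtain ⟨t₁, ht₁, hlt⟩ := hcon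
    set φ : ℝ → ℝ := fun s => 2 * α * s * deriv g s - g s with hφ_def
    have hφc : Continuous φ := ((continuous_const.mul continuous_id).mul hdc).sub
      hg_diff.continuous
    have hφ0 : φ 0 = 0 := by simp [hφ_def, hg_zero]
    have hφt₁ : φ t₁ < 0 := by simp only [hφ_def]; linarith
    set S : Set ℝ := Icc 0 t₁ ∩ φ ⁻¹' {0} with hS_def
    have hS0 : (0:ℝ) ∈ S := ⟨⟨le_refl 0, ht₁.le⟩, hφ0⟩
    have hSb : BddAbove S := BddAbove.mono (fun x hx => hx.1) bddAbove_Icc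
    have hScl : IsClosed S := isClosed_Icc.inter (isClosed_singleton.preimage hφc)
    set t₀ := sSup S with ht₀_def
    have ht₀S : t₀ ∈ S := hScl.csSup_mem ⟨0, hS0⟩ hSb
    have ht₀0 : 0 ≤ t₀ := ht₀S.1.1
    have hφt₀ : φ t₀ = 0 := ht₀S.2
    have ht₀lt : t₀ < t₁ := lt_of_le_of_ne ht₀S.1.2 (by
      intro h; rw [h] at hφt₀; linarith)
    -- φ < 0 on (t₀, t₁]
    have hnegon : ∀ s, t₀ < s → s ≤ t₁ → φ s < 0 := by
      intro s hs hst
      by_contra hge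
      push_neg at hge
      have h0mem : (0:ℝ) ∈ Icc (φ t₁) (φ s) := ⟨hφt₁.le, hge⟩
      obtain ⟨c, hc, hφc0⟩ := intermediate_value_Icc' hst hφc.continuousOn h0mem
      have hcS : c ∈ S := ⟨⟨ht₀0.trans (hs.le.trans hc.1), hc.2⟩, hφc0⟩
      have := le_csSup hSb hcS
      linarith [hs.trans_le hc.1]
    -- φ strictly monotone on [t₀, t₁]
    have hmonoφ : StrictMonoOn φ (Icc t₀ t₁) := by
      apply strictMonoOn_of_deriv_pos (convex_Icc _ _) hφc.continuousOn
      intro x hx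
      rw [interior_Icc] at hx
      have hx0 : 0 < x := lt_of_le_of_lt ht₀0 hx.1
      have hG : 0 < g x := hgpos x hx0
      have hφx : φ x < 0 := hnegon x hx.1 hx.2.le
      -- compute deriv φ x
      set G := g x with hG_def
      set u : ℝ := 1 + A * G ^ β with hu_def
      have hu : 0 < u := by
        have := hbasepos x
        rwa [abs_of_pos hG] at this
      set d := deriv g x with hd_def
      have hdx : d = u ^ (-(1/(N:ℝ))) := by
        rw [hd_def, hD, abs_of_pos hG]
      have hdpos : 0 < d := hd_pos x
      -- deriv g eventually equals the formula without abs
      have hev : (deriv g) =ᶠ[nhds x]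
          (fun s => (1 + A * (g s) ^ β) ^ (-(1/(N:ℝ)))) := by
        have h1 : ∀ᶠ s in nhds x, 0 < g s :=
          (hg_diff x).continuousAt.eventually (eventually_gt_nhds hG)
        filter_upwards [h1] with s hs
        rw [hD, abs_of_pos hs]
      have h2 : HasDerivAt (fun s => (g s) ^ β) (d * β * G ^ (β - 1)) x :=
        (hg_diff x).hasDerivAt.rpow_const (Or.inl hG.ne')
      have hinner : HasDerivAt (fun s => 1 + A * (g s) ^ β)
          (A * (d * β * G ^ (β - 1))) x := (h2.const_mul A).const_add 1
      set v : ℝ := u ^ (-(1/(N:ℝ)) - 1) with hv_def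
      have hv : 0 < v := rpow_pos_of_pos hu _
      set E : ℝ := A * (d * β * G ^ (β - 1)) * (-(1/(N:ℝ))) * v with hE_def
      have hDform : HasDerivAt (fun s => (1 + A * (g s) ^ β) ^ (-(1/(N:ℝ)))) E x := by
        rw [hE_def, hv_def, hu_def]
        exact hinner.rpow_const (Or.inl hu.ne')
      have hDg : HasDerivAt (deriv g) E x := hDform.congr_of_eventuallyEq hev
      have hlin : HasDerivAt (fun s : ℝ => 2 * α * s) (2 * α) x := by
        simpa using (hasDerivAt_id x).const_mul (2 * α)
      have hfull : HasDerivAt φ (2 * α * deriv g x + 2 * α * x * E - deriv g x) x := by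
        rw [hφ_def]
        exact (hlin.mul hDg).sub (hg_diff x).hasDerivAt
      rw [hfull.deriv, ← hd_def]
      -- numeric part
      have hNne : ((N:ℝ)) ≠ 0 := hNpos.ne'
      have h1 : 2 * α * x * d < G := by
        simp only [hφ_def] at hφx
        rw [← hd_def, ← hG_def] at hφx
        linarith
      have hGb1 : 0 < G ^ (β - 1) := rpow_pos_of_pos hG _
      have hdv : d = v * u := by
        rw [hdx, hv_def, ← rpow_add_one hu.ne']
        norm_num
      have hGβ : G ^ (β - 1) * G = G ^ β := by
        rw [← rpow_add_one hG.ne']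
        norm_num
      have key : A * G ^ (β - 1) * v * G = d - v := by
        have h3 : A * G ^ (β - 1) * v * G = A * G ^ β * v := by
          rw [← hGβ]; ring
        rw [h3, hdv, hu_def]; ring
      have hc : 0 < A * G ^ (β - 1) * v := mul_pos (mul_pos hA hGb1) hv
      have h2' : 2 * α * x * d * (A * G ^ (β - 1) * v) < G * (A * G ^ (β - 1) * v) :=
        mul_lt_mul_of_pos_right h1 hc
      have h4 : 2 * α * x * d * (A * G ^ (β - 1) * v) < d - v := by
        nlinarith [key, h2']
      have hexp : 2 * α * d + 2 * α * x * E - d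
          = (2 * α - 1) * (d - 2 * α * x * d * (A * G ^ (β - 1) * v)) := by
        rw [hE_def, hβ_def]
        field_simp
        ring
      rw [hexp]
      exact mul_pos (by linarith) (by linarith)
    have := hmonoφ ⟨le_refl t₀, ht₀lt.le⟩ ⟨ht₀lt.le, le_refl t₁⟩ ht₀lt
    linarith
  intro t ht
  refine ⟨?_, ?_⟩
  · have := hleft t ht
    linarith
  · have := hright t ht
    nlinarith [hα]
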